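/- Fix a positive integer N_t and real numbers δ and ψ. Let D = {(m,n) ∈ ℤ × ℤ : 1 ≤ n ≤ N_t − 1 and n + 1 ≤ m ≤ N_t} and, for (m,n) ∈ D, let q_{m,n}(ω) = 2 cos((m − n)πψ) · g_m(ω) · g_n(ω), where g_k(ω) = Sa(δ(ω − (k−1)π)). Then the function ω ↦ ∑_{(m,n) ∈ D} q_{m,n}(ω) is symmetric about ω = (N_t − 1)π/2; that is, ∑_{(m,n) ∈ D} q_{m,n}((N_t − 1)π − ω) = ∑_{(m,n) ∈ D} q_{m,n}(ω) for every real ω. (Conclusion of the appendix: the cross-term sum in the beamforming gain is symmetric about ω = (N_t−1)π/2.) -/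

import Mathlib

open Real Finset

/-- The normalized sample function `Sa x = sin x / x` with `Sa 0 = 1`. -/
noncomputable def Sa (x : ℝ) : ℝ := if x = 0 then 1 else Real.sin x / x

/-- `g δ k ω = Sa (δ (ω − (k−1)π))` for an integer index `k`. -/
noncomputable def g (δ : ℝ) (k : ℤ) (ω : ℝ) : ℝ := Sa (δ * (ω - ((k : ℝ) - 1) * π))

/-- `q_{m,n}(ω) = 2 cos((m − n)πψ) g_m(ω) g_n(ω)`. -/
noncomputable def q (δ ψ : ℝ) (m n : ℤ) (ω : ℝ) : ℝ :=
  2 * Real.cos (((m : ℝ) - (n : ℝ)) * π * ψ) * g δ m ω * g δ n ω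

/-- The index set `D = {(m,n) : 1 ≤ n ≤ N_t − 1, n + 1 ≤ m ≤ N_t}` of integer pairs. -/
noncomputable def D (Nt : ℕ) : Finset (ℤ × ℤ) :=
  (Finset.Icc (1 : ℤ) (Nt : ℤ) ×ˢ Finset.Icc (1 : ℤ) (Nt : ℤ)).filter
    (fun p => 1 ≤ p.2 ∧ p.2 ≤ (Nt : ℤ) - 1 ∧ p.2 + 1 ≤ p.1 ∧ p.1 ≤ (Nt : ℤ))

lemma Sa_neg (x : ℝ) : Sa (-x) = Sa x := by
  unfold Sa
  rcases eq_or_ne x 0 with h | h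
  · simp [h]
  · rw [if_neg (neg_ne_zero.mpr h), if_neg h, Real.sin_neg, neg_div_neg_eq]

lemma g_refl (Nt : ℕ) (δ : ℝ) (k : ℤ) (ω : ℝ) :
    g δ k (((Nt : ℝ) - 1) * π - ω) = g δ ((Nt : ℤ) + 1 - k) ω := by
  unfold g
  rw [← Sa_neg (δ * (ω - ((((Nt : ℤ) + 1 - k : ℤ) : ℝ) - 1) * π))]
  push_cast
  ring_nf

lemma mem_D (Nt : ℕ) (p : ℤ × ℤ) :
    p ∈ D Nt ↔ 1 ≤ p.2 ∧ p.2 ≤ (Nt : ℤ) - 1 ∧ p.2 + 1 ≤ p.1 ∧ p.1 ≤ (Nt : ℤ) := by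
  simp only [D, Finset.mem_filter, Finset.mem_product, Finset.mem_Icc]
  omega

/-- The cross-term sum `∑_{(m,n)∈D} q_{m,n}(ω)` is symmetric about `ω = (N_t − 1)π/2`. -/
theorem cross_sum_symm (Nt : ℕ) (hNt : 0 < Nt) (δ ψ : ℝ) :
    ∀ ω : ℝ,
      ∑ p ∈ D Nt, q δ ψ p.1 p.2 (((Nt : ℝ) - 1) * π - ω) =
        ∑ p ∈ D Nt, q δ ψ p.1 p.2 ω := by
  intro ω
  refine Finset.sum_nbij' (fun p => ((Nt : ℤ) + 1 - p.2, (Nt : ℤ) + 1 - p.1))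
    (fun p => ((Nt : ℤ) + 1 - p.2, (Nt : ℤ) + 1 - p.1)) ?_ ?_ ?_ ?_ ?_
  · intro p hp
    rw [mem_D] at hp ⊢
    omega
  · intro p hp
    rw [mem_D] at hp ⊢
    omega
  · intro p _; simp
  · intro p _; simp
  · intro p hp
    unfold q
    rw [g_refl, g_refl]
    dsimp only
    have h : (((((Nt : ℤ) + 1 - p.2 : ℤ)) : ℝ) - ((((Nt : ℤ) + 1 - p.1 : ℤ)) : ℝ)) * π * ψ
        = (((p.1 : ℝ)) - ((p.2 : ℝ))) * π * ψ := by push_cast; ring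
    rw [h]; ring
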